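/- (Cycle lemma.) Let x_1, …, x_n be integers with x_i ≥ −1 for all i and ∑_{i=1}^n x_i = −r, where r ≥ 0. For j ∈ ℤ let (x^(j)_1,…,x^(j)_n) be the cyclic shift x^(j)_i := x_{i+j} (indices taken modulo n), with partial sums S^(j)_k := ∑_{i=1}^k x^(j)_i for 0 ≤ k ≤ n. Then there are exactly r values of j ∈ {1,…,n} such that S^(j)_k > −r for all 0 ≤ k < n. -/

import Mathlib

open Filter Topology
open scoped Classical

/-- Counting strict records: for a walk `S` starting at `0` with steps `≥ -1`,
the number of strict records `t ≤ N` (counting `t = 0`) is `1 - min_{m ≤ N} S m`. -/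
private lemma recCount (S : ℕ → ℤ) (h0 : S 0 = 0) (hstep : ∀ m, S m - 1 ≤ S (m+1)) (N : ℕ) :
    ∃ M : ℤ, (∀ m, m ≤ N → M ≤ S m) ∧ (∃ m, m ≤ N ∧ S m = M) ∧
      ((((Finset.range (N+1)).filter (fun t => ∀ m, m < t → S t < S m)).card : ℤ) = 1 - M) := by
  induction N with
  | zero =>
      refine ⟨0, ?_, ⟨0, le_refl 0, h0⟩, ?_⟩
      · intro m hm
        have : m = 0 := Nat.le_zero.mp hm
        rw [this, h0]
      · have h : ∀ m, m < 0 → S 0 < S m := fun m hm => absurd hm (Nat.not_lt_zero m)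
        simp [Finset.range_one, Finset.filter_singleton, h]
  | succ N ih =>
      obtain ⟨M, hmin, ⟨m₀, hm₀, hSm₀⟩, hcard⟩ := ih
      have hins : Finset.range (N+1+1) = insert (N+1) (Finset.range (N+1)) :=
        Finset.range_add_one
      by_cases hrec : ∀ m, m < N+1 → S (N+1) < S m
      · have h1 : S (N+1) < M := hSm₀ ▸ hrec m₀ (by omega)
        have h2 : M - 1 ≤ S (N+1) := by
          have ha := hmin N (le_refl N)
          have hb := hstep N
          omega
        have heq : S (N+1) = M - 1 := by omega
        refine ⟨M - 1, ?_, ⟨N+1, le_refl _, heq⟩, ?_⟩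
        · intro m hm
          rcases Nat.lt_or_ge m (N+1) with h | h
          · have := hmin m (by omega); omega
          · have : m = N+1 := by omega
            rw [this, heq]
        · rw [hins, Finset.filter_insert, if_pos hrec,
            Finset.card_insert_of_notMem (by simp)]
          push_cast
          omega
      · push_neg at hrec
        obtain ⟨m₁, hm₁, hSm₁⟩ := hrec
        refine ⟨M, ?_, ⟨m₀, by omega, hSm₀⟩, ?_⟩
        · intro m hm
          rcases Nat.lt_or_ge m (N+1) with h | h
          · exact hmin m (by omega)
          · have hmeq : m = N+1 := by omega
            have := hmin m₁ (by omega)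
            rw [hmeq]; omega
        · rw [hins, Finset.filter_insert, if_neg ?_, hcard]
          intro hc
          exact absurd (hc m₁ hm₁) (not_lt.mpr hSm₁)

/-- The cycle lemma (Lemma 15.3 of Janson; Dvoretzky–Motzkin): if `x_1, …, x_n ≥ −1`
are integers with sum `−r ≤ 0`, then exactly `r` of the `n` cyclic shifts of
`(x_1,…,x_n)` have all proper partial sums `> −r`. -/
theorem cycle_lemma (n : ℕ) (hn : 0 < n) (x : Fin n → ℤ) (r : ℕ)
    (hge : ∀ i, -1 ≤ x i) (hsum : ∑ i, x i = -(r : ℤ)) :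
    ((Finset.range n).filter fun j =>
        ∀ k, k < n →
          -(r : ℤ) < ∑ i ∈ Finset.range k, x ⟨(i + j) % n, Nat.mod_lt _ hn⟩).card = r := by
  classical
  set S : ℕ → ℤ := fun m => ∑ i ∈ Finset.range m, x ⟨i % n, Nat.mod_lt _ hn⟩ with hSdef
  have hS0 : S 0 = 0 := by simp [hSdef]
  have hSsucc : ∀ m, S (m+1) = S m + x ⟨m % n, Nat.mod_lt _ hn⟩ := by
    intro m; simp [hSdef, Finset.sum_range_succ]
  have hstep : ∀ m, S m - 1 ≤ S (m+1) := by
    intro m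
    have := hge ⟨m % n, Nat.mod_lt _ hn⟩
    rw [hSsucc]
    omega
  have hSn : S n = -(r : ℤ) := by
    rw [← hsum]
    simp only [hSdef]
    rw [← Fin.sum_univ_eq_sum_range (fun i => x ⟨i % n, Nat.mod_lt _ hn⟩) n]
    apply Finset.sum_congr rfl
    intro i _
    congr 1
    exact Fin.ext (Nat.mod_eq_of_lt i.isLt)
  have hper : ∀ m, S (m + n) = S m - r := by
    intro m
    induction m with
    | zero => rw [Nat.zero_add, hSn, hS0]; ring
    | succ m ih =>
        have h1 : m + 1 + n = (m + n) + 1 := by omega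
        rw [h1, hSsucc, ih, hSsucc]
        have h2 : (⟨(m + n) % n, Nat.mod_lt _ hn⟩ : Fin n) = ⟨m % n, Nat.mod_lt _ hn⟩ :=
          Fin.ext (Nat.add_mod_right m n)
        rw [h2]; ring
  have hwin : ∀ j k, ∑ i ∈ Finset.range k, x ⟨(i + j) % n, Nat.mod_lt _ hn⟩
      = S (j + k) - S j := by
    intro j k
    induction k with
    | zero => simp
    | succ k ih =>
        rw [Finset.sum_range_succ, ih, show j + (k+1) = (j+k)+1 from rfl, hSsucc]
        have h2 : (⟨(k + j) % n, Nat.mod_lt _ hn⟩ : Fin n) = ⟨(j + k) % n, Nat.mod_lt _ hn⟩ :=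
          Fin.ext (by rw [Nat.add_comm])
        rw [h2]; ring
  have hequiv : ∀ j, j < n →
      ((∀ k, k < n → -(r : ℤ) < ∑ i ∈ Finset.range k, x ⟨(i + j) % n, Nat.mod_lt _ hn⟩) ↔
       (∀ m, m < j + n → S (j + n) < S m)) := by
    intro j hj
    constructor
    · intro h m hm
      by_cases hmj : j ≤ m
      · have hk := h (m - j) (by omega)
        rw [hwin] at hk
        have hjm : j + (m - j) = m := by omega
        rw [hjm] at hk
        have := hper j
        omega
      · have h1 : S (j + n) < S (m + n) := by
          have hk := h (m + n - j) (by omega)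
          rw [hwin] at hk
          have hjm : j + (m + n - j) = m + n := by omega
          rw [hjm] at hk
          have := hper j
          omega
        have h0 := h 0 hn
        simp only [Finset.sum_range_zero] at h0
        have := hper m
        omega
    · intro h k hk
      have hpj := hper j
      rcases Nat.eq_zero_or_pos k with rfl | hkpos
      · simp only [Finset.sum_range_zero]
        have := h j (by omega)
        omega
      · rw [hwin]
        have := h (j + k) (by omega)
        omega
  -- counting
  obtain ⟨n', rfl⟩ : ∃ n', n = n' + 1 := ⟨n - 1, by omega⟩
  obtain ⟨M₁, hmin₁, hex₁, hcard₁⟩ := recCount S hS0 hstep n'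
  obtain ⟨M₂, hmin₂, hex₂, hcard₂⟩ := recCount S hS0 hstep (2*n' + 1)
  have hM : M₂ = M₁ - r := by
    obtain ⟨m₁, hm₁, hSm₁⟩ := hex₁
    obtain ⟨m₂, hm₂, hSm₂⟩ := hex₂
    have h1 : M₂ ≤ M₁ - r := by
      have ha := hmin₂ (m₁ + (n'+1)) (by omega)
      have hb := hper m₁
      omega
    have h2 : M₁ - r ≤ M₂ := by
      rcases Nat.lt_or_ge m₂ (n'+1) with h | h
      · have := hmin₁ m₂ (by omega); omega
      · have hm : m₂ - (n'+1) + (n'+1) = m₂ := by omega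
        have hp := hper (m₂ - (n'+1))
        rw [hm] at hp
        have := hmin₁ (m₂ - (n'+1)) (by omega)
        omega
    omega
  have hsplit : ((Finset.range (2*n'+1+1)).filter (fun t => ∀ m, m < t → S t < S m)).card
      = ((Finset.range (n'+1)).filter (fun t => ∀ m, m < t → S t < S m)).card
        + ((Finset.Ico (n'+1) (2*n'+2)).filter (fun t => ∀ m, m < t → S t < S m)).card := by
    have hu : Finset.range (2*n'+1+1)
        = Finset.range (n'+1) ∪ Finset.Ico (n'+1) (2*n'+2) := by
      rw [Finset.range_eq_Ico, Finset.range_eq_Ico]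
      rw [Finset.Ico_union_Ico_eq_Ico (by omega) (by omega)]
    rw [hu, Finset.filter_union, Finset.card_union_of_disjoint]
    apply Finset.disjoint_filter_filter
    rw [Finset.range_eq_Ico]
    exact Finset.Ico_disjoint_Ico_consecutive 0 (n'+1) (2*n'+2)
  have hbij : ((Finset.range (n'+1)).filter fun j =>
        ∀ k, k < n'+1 →
          -(r : ℤ) < ∑ i ∈ Finset.range k, x ⟨(i + j) % (n'+1), Nat.mod_lt _ hn⟩).card
      = ((Finset.Ico (n'+1) (2*n'+2)).filter (fun t => ∀ m, m < t → S t < S m)).card := by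
    apply Finset.card_bij (fun j _ => j + (n'+1))
    · intro j hj
      rw [Finset.mem_filter] at hj ⊢
      obtain ⟨hj1, hj2⟩ := hj
      rw [Finset.mem_range] at hj1
      refine ⟨Finset.mem_Ico.mpr ⟨by omega, by omega⟩, ?_⟩
      exact (hequiv j hj1).mp hj2
    · intro a ha b hb hab
      omega
    · intro t ht
      rw [Finset.mem_filter, Finset.mem_Ico] at ht
      obtain ⟨⟨ht1, ht2⟩, ht3⟩ := ht
      refine ⟨t - (n'+1), ?_, by omega⟩
      rw [Finset.mem_filter, Finset.mem_range]
      refine ⟨by omega, ?_⟩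
      apply (hequiv (t - (n'+1)) (by omega)).mpr
      have : t - (n'+1) + (n'+1) = t := by omega
      rw [this]
      exact ht3
  rw [hbij]
  omega
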